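/- Let F be a finite field with q elements, let p be a 1-dimensional F-subspace of F³, and let ℓ₁ and ℓ₃ be 2-dimensional subspaces of F³ containing p (so that (p,ℓ₁) and (p,ℓ₃) are complete flags with the same point). Then the number of 2-dimensional subspaces ℓ₂ of F³ with p ≤ ℓ₂, ℓ₂ ≠ ℓ₁ and ℓ₂ ≠ ℓ₃ equals q if ℓ₁ = ℓ₃, and equals q−1 if ℓ₁ ≠ ℓ₃. (This is the decategorified relation L² = (q−1)·L + q·1 for the categorified Hecke algebra generator L, the span of flags sharing a point but with different lines.) -/

import Mathlib

open scoped Classical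

/-- Number of lines (2-dim subspaces) of `F³` through a point (1-dim subspace) is `q+1`. -/
lemma count_lines_through_point (F : Type) [Field F] [Fintype F]
    (p : Submodule F (Fin 3 → F)) (hp : Module.finrank F p = 1) :
    Nat.card {ℓ : Submodule F (Fin 3 → F) //
        Module.finrank F ℓ = 2 ∧ p ≤ ℓ} = Fintype.card F + 1 := by
  classical
  haveI : Finite (Submodule F (Fin 3 → F)) :=
    Finite.of_injective (fun ℓ => (ℓ : Set (Fin 3 → F))) SetLike.coe_injective
  haveI := Fintype.ofFinite (Submodule F (Fin 3 → F))
  set n := Fintype.card F with hn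
  have hn2 : 2 ≤ n := Fintype.one_lt_card
  set T : Finset (Fin 3 → F) := Finset.univ.filter (fun v => v ∉ p) with hT
  set A : Finset (Submodule F (Fin 3 → F)) :=
    Finset.univ.filter (fun ℓ => Module.finrank F ℓ = 2 ∧ p ≤ ℓ) with hA
  -- the rank of p ⊔ span v for v ∉ p
  have hrank : ∀ v : Fin 3 → F, v ∉ p →
      Module.finrank F ↥(p ⊔ Submodule.span F {v}) = 2 := by
    intro v hv
    have hv0 : v ≠ 0 := fun h => hv (h ▸ p.zero_mem)
    have hspan : Module.finrank F ↥(Submodule.span F {v}) = 1 :=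
      finrank_span_singleton hv0
    have hsum := Submodule.finrank_sup_add_finrank_inf_eq p (Submodule.span F {v})
    rw [hp, hspan] at hsum
    have hlt : p < p ⊔ Submodule.span F {v} := by
      refine lt_of_le_of_ne le_sup_left ?_
      intro h
      exact hv (h ▸ Submodule.mem_sup_right (Submodule.mem_span_singleton_self v))
    have h1 : 1 < Module.finrank F ↥(p ⊔ Submodule.span F {v}) := by
      rw [← hp]; exact Submodule.finrank_lt_finrank_of_lt hlt
    omega
  have hmap : ∀ v ∈ T, (p ⊔ Submodule.span F {v}) ∈ A := by
    intro v hv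
    rw [hT, Finset.mem_filter] at hv
    rw [hA, Finset.mem_filter]
    exact ⟨Finset.mem_univ _, hrank v hv.2, le_sup_left⟩
  -- fibers
  have hfib : ∀ ℓ ∈ A, (T.filter fun v => p ⊔ Submodule.span F {v} = ℓ).card = n ^ 2 - n := by
    intro ℓ hℓ
    rw [hA, Finset.mem_filter] at hℓ
    obtain ⟨-, hℓ2, hpℓ⟩ := hℓ
    have hset : (T.filter fun v => p ⊔ Submodule.span F {v} = ℓ) =
        Finset.univ.filter (fun v => v ∈ ℓ ∧ v ∉ p) := by
      ext v
      simp only [hT, Finset.mem_filter, Finset.mem_univ, true_and]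
      constructor
      · rintro ⟨hv, rfl⟩
        exact ⟨Submodule.mem_sup_right (Submodule.mem_span_singleton_self v), hv⟩
      · rintro ⟨hvℓ, hvp⟩
        refine ⟨hvp, ?_⟩
        have hle : p ⊔ Submodule.span F {v} ≤ ℓ :=
          sup_le hpℓ ((Submodule.span_singleton_le_iff_mem v ℓ).2 hvℓ)
        exact Submodule.eq_of_le_of_finrank_eq hle (by rw [hrank v hvp, hℓ2])
    rw [hset]
    have hsplit := Finset.card_filter_add_card_filter_not
      (s := Finset.univ.filter (fun v : Fin 3 → F => v ∈ ℓ)) (p := fun v => v ∈ p)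
    have hin : ((Finset.univ.filter (fun v : Fin 3 → F => v ∈ ℓ)).filter
        (fun v => v ∈ p)).card = n := by
      have : ((Finset.univ.filter (fun v : Fin 3 → F => v ∈ ℓ)).filter (fun v => v ∈ p)) =
          Finset.univ.filter (fun v : Fin 3 → F => v ∈ p) := by
        ext v
        simp only [Finset.mem_filter, Finset.mem_univ, true_and, and_iff_right_iff_imp]
        exact fun h => hpℓ h
      rw [this, ← Fintype.card_subtype]
      have := Module.card_eq_pow_finrank (K := F) (V := ↥p)
      rw [hp, pow_one] at this
      exact this
    have hℓcard : (Finset.univ.filter (fun v : Fin 3 → F => v ∈ ℓ)).card = n ^ 2 := by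
      rw [← Fintype.card_subtype]
      have := Module.card_eq_pow_finrank (K := F) (V := ↥ℓ)
      rwa [hℓ2] at this
    have heq : ((Finset.univ.filter (fun v : Fin 3 → F => v ∈ ℓ)).filter
        (fun v => ¬ v ∈ p)) = Finset.univ.filter (fun v => v ∈ ℓ ∧ v ∉ p) := by
      ext v; simp [and_comm]
    rw [heq, hℓcard, hin] at hsplit
    omega
  have hcount := Finset.card_eq_sum_card_fiberwise hmap
  rw [Finset.sum_congr rfl hfib, Finset.sum_const, smul_eq_mul] at hcount
  -- T.card = n^3 - n
  have hTcard : T.card = n ^ 3 - n := by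
    have hsplit := Finset.card_filter_add_card_filter_not
      (s := (Finset.univ : Finset (Fin 3 → F))) (p := fun v => v ∈ p)
    have hpcard : ((Finset.univ : Finset (Fin 3 → F)).filter (fun v => v ∈ p)).card = n := by
      rw [← Fintype.card_subtype]
      have := Module.card_eq_pow_finrank (K := F) (V := ↥p)
      rw [hp, pow_one] at this
      exact this
    have huniv : (Finset.univ : Finset (Fin 3 → F)).card = n ^ 3 := by
      simp [Fintype.card_fun, hn]
    rw [hpcard, huniv] at hsplit
    rw [hT]
    omega
  rw [hTcard] at hcount
  have hkey : A.card = n + 1 := by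
    have hpos : 0 < n ^ 2 - n := by
      have : n < n ^ 2 := by nlinarith
      omega
    have harith : n ^ 3 - n = (n + 1) * (n ^ 2 - n) := by
      have h1 : n ≤ n ^ 2 := by nlinarith
      have h2 : n ≤ n ^ 3 := by nlinarith
      zify [h1, h2]
      ring
    rw [harith] at hcount
    exact Nat.eq_of_mul_eq_mul_right hpos hcount.symm
  rw [Nat.card_eq_fintype_card, Fintype.card_subtype]
  exact hkey

/-- Decategorified relation `L² = (q−1)·L + q·1` for the generator `L` ("same point,
different line") of the `A₂` Hecke algebra: given a point `p` in `F³` and lines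
`ℓ₁, ℓ₃` containing `p`, the number of lines `ℓ₂` containing `p` distinct from both
`ℓ₁` and `ℓ₃` is `q` if `ℓ₁ = ℓ₃` and `q − 1` otherwise. -/
theorem hecke_L_squared_relation (F : Type) [Field F] [Fintype F]
    (q : ℕ) (hq : Fintype.card F = q)
    (p ℓ₁ ℓ₃ : Submodule F (Fin 3 → F))
    (hp : Module.finrank F p = 1)
    (hℓ₁ : Module.finrank F ℓ₁ = 2) (hℓ₃ : Module.finrank F ℓ₃ = 2)
    (h₁ : p ≤ ℓ₁) (h₃ : p ≤ ℓ₃) :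
    Nat.card {ℓ₂ : Submodule F (Fin 3 → F) //
        Module.finrank F ℓ₂ = 2 ∧ p ≤ ℓ₂ ∧ ℓ₂ ≠ ℓ₁ ∧ ℓ₂ ≠ ℓ₃} =
      if ℓ₁ = ℓ₃ then q else q - 1 := by
  classical
  haveI : Finite (Submodule F (Fin 3 → F)) :=
    Finite.of_injective (fun ℓ => (ℓ : Set (Fin 3 → F))) SetLike.coe_injective
  have hq2 : 2 ≤ q := by rw [← hq]; exact Fintype.one_lt_card
  have key := count_lines_through_point F p hp
  rw [hq] at key
  set S : Set (Submodule F (Fin 3 → F)) := {ℓ | Module.finrank F ℓ = 2 ∧ p ≤ ℓ} with hS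
  have hScard : S.ncard = q + 1 := by
    rw [← Nat.card_coe_set_eq]
    exact key
  have h1S : ℓ₁ ∈ S := ⟨hℓ₁, h₁⟩
  have h3S : ℓ₃ ∈ S := ⟨hℓ₃, h₃⟩
  have hsub : ({ℓ₁, ℓ₃} : Set (Submodule F (Fin 3 → F))) ⊆ S := by
    intro x hx
    rcases hx with rfl | rfl
    · exact h1S
    · exact h3S
  have hset : {ℓ₂ : Submodule F (Fin 3 → F) |
      Module.finrank F ℓ₂ = 2 ∧ p ≤ ℓ₂ ∧ ℓ₂ ≠ ℓ₁ ∧ ℓ₂ ≠ ℓ₃} = S \ {ℓ₁, ℓ₃} := by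
    ext ℓ
    simp only [hS, Set.mem_setOf_eq, Set.mem_diff, Set.mem_insert_iff, Set.mem_singleton_iff]
    tauto
  have hmain : Nat.card {ℓ₂ : Submodule F (Fin 3 → F) //
      Module.finrank F ℓ₂ = 2 ∧ p ≤ ℓ₂ ∧ ℓ₂ ≠ ℓ₁ ∧ ℓ₂ ≠ ℓ₃} = (S \ {ℓ₁, ℓ₃}).ncard := by
    rw [← Nat.card_coe_set_eq, ← hset]
    rfl
  rw [hmain, Set.ncard_diff hsub, hScard]
  by_cases h : ℓ₁ = ℓ₃
  · subst h
    rw [if_pos rfl]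
    simp
  · rw [Set.ncard_pair h, if_neg h]
    omega
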